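/- arXiv:1011.2340 — 6 statements merged into one kernel-verified Lean document; each statement's English description precedes it below -/
import Mathlib

section
/- For every integer m > 51, there exists a prime p ≡ 2 (mod 3) such that 3p < m and p does not divide m. -/
/-- Any natural number ≡ 2 (mod 3) has a prime factor ≡ 2 (mod 3). -/
lemma exists_prime_factor_two_mod_three : ∀ N : ℕ, 2 ≤ N → N % 3 = 2 →
    ∃ q : ℕ, q.Prime ∧ q % 3 = 2 ∧ q ∣ N := by
  intro N
  induction N using Nat.strong_induction_on with
  | _ N ih =>
    intro h2 h3
    have hN1 : N ≠ 1 := by omega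
    have hp : N.minFac.Prime := Nat.minFac_prime hN1
    by_cases hmod : N.minFac % 3 = 2
    · exact ⟨N.minFac, hp, hmod, Nat.minFac_dvd N⟩
    · have hdvd := Nat.minFac_dvd N
      have hp3 : N.minFac ≠ 3 := by
        intro h
        rw [h] at hdvd
        omega
      have h1 : N.minFac % 3 = 1 := by
        have h0 : N.minFac % 3 ≠ 0 := by
          intro h
          have h3d : (3 : ℕ) ∣ N.minFac := by omega
          have := (Nat.prime_dvd_prime_iff_eq (by norm_num) hp).mp h3d
          exact hp3 this.symm
        omega
      obtain ⟨M, hNM⟩ := hdvd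
      have hMmod : M % 3 = 2 := by
        have hmm := Nat.mul_mod N.minFac M 3
        rw [← hNM, h1, one_mul] at hmm
        omega
      have hM0 : M ≠ 0 := by
        rintro rfl
        rw [mul_zero] at hNM
        omega
      have hM1 : M ≠ 1 := by
        rintro rfl
        rw [mul_one] at hNM
        rw [hNM] at h3
        omega
      have hMlt : M < N := by
        have h2M : 2 * M ≤ N := by
          rw [hNM]
          exact Nat.mul_le_mul_right M hp.two_le
        omega
      obtain ⟨q, hq, hq3, hqd⟩ := ih M hMlt (by omega) hMmod
      exact ⟨q, hq, hq3, hqd.trans ⟨N.minFac, by rw [Nat.mul_comm]; exact hNM⟩⟩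

theorem stmt_1 (m : ℕ) (hm : 51 < m) :
    ∃ p : ℕ, p.Prime ∧ p % 3 = 2 ∧ 3 * p < m ∧ ¬ p ∣ m := by
  by_cases h2 : 2 ∣ m
  case neg => exact ⟨2, Nat.prime_two, rfl, by omega, h2⟩
  by_cases h5 : 5 ∣ m
  case neg => exact ⟨5, by norm_num, rfl, by omega, h5⟩
  by_cases h11 : 11 ∣ m
  case neg => exact ⟨11, by norm_num, rfl, by omega, h11⟩
  by_cases h17 : 17 ∣ m
  case neg => exact ⟨17, by norm_num, rfl, by omega, h17⟩
  have hm0 : m ≠ 0 := by omega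
  -- the set of "small" prime factors of m congruent to 2 mod 3, other than 2 and 5
  obtain ⟨S, hSdef⟩ : ∃ S : Finset ℕ,
      S = m.primeFactors.filter (fun p => p % 3 = 2 ∧ 3 * p < m ∧ p ≠ 2 ∧ p ≠ 5) :=
    ⟨_, rfl⟩
  obtain ⟨Q, hQdef⟩ : ∃ Q : ℕ, Q = ∏ p ∈ S, p := ⟨_, rfl⟩
  have hSm : ∀ p ∈ S, p.Prime ∧ p ∣ m ∧ p % 3 = 2 ∧ 3 * p < m ∧ p ≠ 2 ∧ p ≠ 5 := by
    intro p hp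
    rw [hSdef, Finset.mem_filter, Nat.mem_primeFactors] at hp
    tauto
  have h11S : 11 ∈ S := by
    rw [hSdef, Finset.mem_filter, Nat.mem_primeFactors]
    refine ⟨⟨by norm_num, h11, hm0⟩, by norm_num, by omega, by norm_num, by norm_num⟩
  have h17S : 17 ∈ S := by
    rw [hSdef, Finset.mem_filter, Nat.mem_primeFactors]
    refine ⟨⟨by norm_num, h17, hm0⟩, by norm_num, by omega, by norm_num, by norm_num⟩
  have hQpos : 0 < Q := by
    rw [hQdef]
    exact Finset.prod_pos fun p hp => (hSm p hp).1.pos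
  have h11Q : 11 ∣ Q := by rw [hQdef]; exact Finset.dvd_prod_of_mem _ h11S
  have h17Q : 17 ∣ Q := by rw [hQdef]; exact Finset.dvd_prod_of_mem _ h17S
  have h187 : 187 ≤ Q := by
    have : (187 : ℕ) ∣ Q := (Nat.Coprime.mul_dvd_of_dvd_of_dvd (by norm_num) h11Q h17Q)
    exact Nat.le_of_dvd hQpos this
  -- 2 ∤ Q and 3 ∤ Q
  have hQ2 : ¬ 2 ∣ Q := by
    intro h
    rw [hQdef] at h
    obtain ⟨p, hpS, hpd⟩ := (Nat.Prime.prime Nat.prime_two).exists_mem_finset_dvd h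
    have hp := hSm p hpS
    rcases (Nat.Prime.eq_one_or_self_of_dvd hp.1 2 hpd) with h' | h'
    · exact absurd h' (by norm_num)
    · exact hp.2.2.2.2.1 h'.symm
  have hQ3 : ¬ 3 ∣ Q := by
    intro h
    rw [hQdef] at h
    obtain ⟨p, hpS, hpd⟩ := (Nat.Prime.prime Nat.prime_three).exists_mem_finset_dvd h
    have hp := hSm p hpS
    rcases (Nat.Prime.eq_one_or_self_of_dvd hp.1 3 hpd) with h' | h'
    · exact absurd h' (by norm_num)
    · have hmod := hp.2.2.1
      rw [← h'] at hmod
      norm_num at hmod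
  -- 10 * Q divides m
  have h10Q : 10 * Q ≤ m := by
    have h2S : (2 : ℕ) ∉ S := fun h => (hSm 2 h).2.2.2.2.1 rfl
    have h5S : (5 : ℕ) ∉ S := fun h => (hSm 5 h).2.2.2.2.2 rfl
    have hsub : insert 2 (insert 5 S) ⊆ m.primeFactors := by
      intro p hp
      rcases Finset.mem_insert.mp hp with h' | hp
      · subst h'; exact Nat.mem_primeFactors.mpr ⟨Nat.prime_two, h2, hm0⟩
      rcases Finset.mem_insert.mp hp with h' | hp
      · subst h'; exact Nat.mem_primeFactors.mpr ⟨by norm_num, h5, hm0⟩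
      · rw [hSdef] at hp
        exact (Finset.filter_subset _ _) hp
    have hdvd : (∏ p ∈ insert 2 (insert 5 S), p) ∣ m :=
      dvd_trans
        (Finset.prod_dvd_prod_of_subset (insert 2 (insert 5 S)) m.primeFactors
          (fun p => p) hsub)
        (Nat.prod_primeFactors_dvd m)
    rw [Finset.prod_insert (by simp [h2S, h5S]), Finset.prod_insert h5S, ← hQdef] at hdvd
    have hQm : 2 * (5 * Q) ∣ m := hdvd
    have hle := Nat.le_of_dvd (Nat.pos_of_ne_zero hm0) hQm
    clear hdvd hQm hsub hQdef
    omega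
  have hQdvd : ∀ p ∈ S, p ∣ Q := by
    intro p hp
    rw [hQdef]
    exact Finset.dvd_prod_of_mem _ hp
  clear hQdef
  have hQ2' : Q % 2 = 1 := by
    clear h2 h5 h11 h17 h11Q h17Q hQ3 h10Q
    omega
  have hQ3' : Q % 3 = 1 ∨ Q % 3 = 2 := by
    clear h2 h5 h11 h17 h11Q h17Q hQ2 h10Q
    omega
  clear h2 h5 h11 h17 h11Q h17Q hQ2 hQ3 hQpos
  obtain ⟨d, hd2, hd12, hdeven, hdmod3, hdmod5, hdprime⟩ :
      ∃ d : ℕ, 2 ≤ d ∧ d ≤ 12 ∧ d % 2 = 0 ∧ (Q - d) % 3 = 2 ∧ Q % 5 ≠ d % 5 ∧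
        (∀ q : ℕ, q.Prime → q ∣ d → q % 3 = 2 → q = 2) := by
    have hdiv : ∀ q < 13, q % 2 = 1 → q % 3 = 2 →
        ¬(q ∣ 2) ∧ ¬(q ∣ 6) ∧ ¬(q ∣ 8) ∧ ¬(q ∣ 12) := by
      decide
    rcases hQ3' with h | h
    · by_cases h5' : Q % 5 = 2
      · refine ⟨8, by norm_num, by norm_num, by norm_num, by omega, by omega, ?_⟩
        intro q hq hdvd hmod
        by_cases hq2 : q = 2
        · exact hq2
        · exfalso
          have hodd : q % 2 = 1 := Nat.odd_iff.mp (hq.odd_of_ne_two hq2)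
          have h13 : q < 13 := by have := Nat.le_of_dvd (by norm_num) hdvd; omega
          exact (hdiv q h13 hodd hmod).2.2.1 hdvd
      · refine ⟨2, le_refl 2, by norm_num, by norm_num, by omega, by omega, ?_⟩
        intro q hq hdvd hmod
        by_cases hq2 : q = 2
        · exact hq2
        · exfalso
          have hodd : q % 2 = 1 := Nat.odd_iff.mp (hq.odd_of_ne_two hq2)
          have h13 : q < 13 := by have := Nat.le_of_dvd (by norm_num) hdvd; omega
          exact (hdiv q h13 hodd hmod).1 hdvd
    · by_cases h5' : Q % 5 = 1
      · refine ⟨12, by norm_num, by norm_num, by norm_num, by omega, by omega, ?_⟩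
        intro q hq hdvd hmod
        by_cases hq2 : q = 2
        · exact hq2
        · exfalso
          have hodd : q % 2 = 1 := Nat.odd_iff.mp (hq.odd_of_ne_two hq2)
          have h13 : q < 13 := by have := Nat.le_of_dvd (by norm_num) hdvd; omega
          exact (hdiv q h13 hodd hmod).2.2.2 hdvd
      · refine ⟨6, by norm_num, by norm_num, by norm_num, by omega, by omega, ?_⟩
        intro q hq hdvd hmod
        by_cases hq2 : q = 2
        · exact hq2
        · exfalso
          have hodd : q % 2 = 1 := Nat.odd_iff.mp (hq.odd_of_ne_two hq2)
          have h13 : q < 13 := by have := Nat.le_of_dvd (by norm_num) hdvd; omega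
          exact (hdiv q h13 hodd hmod).2.1 hdvd
  set N : ℕ := Q - d with hNdef
  have hN2 : 2 ≤ N := by omega
  obtain ⟨q, hq, hq3, hqN⟩ := exists_prime_factor_two_mod_three N hN2 hdmod3
  have hqleN : q ≤ N := Nat.le_of_dvd (by omega) hqN
  have hq3m : 3 * q < m := by omega
  refine ⟨q, hq, hq3, hq3m, ?_⟩
  intro hqm
  -- q cannot be 2 or 5
  have hq2 : q ≠ 2 := by
    intro h
    subst h
    have : (2 : ℕ) ∣ N := hqN
    clear hqm hqN hq3m hqleN hdmod5 hdmod3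
    omega
  have hq5 : q ≠ 5 := by
    intro h
    subst h
    have : (5 : ℕ) ∣ N := hqN
    clear hqm hqN hq3m hqleN hQ2' hdmod3 hdeven
    omega
  -- hence q ∈ S, so q ∣ Q, so q ∣ d, contradiction
  have hqS : q ∈ S := by
    rw [hSdef, Finset.mem_filter, Nat.mem_primeFactors]
    exact ⟨⟨hq, hqm, hm0⟩, hq3, hq3m, hq2, hq5⟩
  have hqQ : q ∣ Q := hQdvd q hqS
  have hqd : q ∣ d := by
    have : d = Q - N := by
      clear hqm hqN hq3m hqleN hQ2' hdmod5 hdmod3 hdeven hqS hqQ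
      omega
    rw [this]
    exact Nat.dvd_sub hqQ hqN
  exact hq2 (hdprime q hq hqd hq3)
end

section
/- Let m > 6 be an integer with m ∉ {9, 12, 18, 24, 30, 60}. Then there exists an integer j' with j' ≡ 2 (mod 3), gcd(j', m) = 1, and fractional part of j'/m strictly less than 1/6. -/
private lemma frac_aux (r m : ℤ) (hr : 0 < r) (h6 : 6 * r < m) :
    Int.fract ((r : ℚ) / (m : ℚ)) < 1 / 6 := by
  have hmz : (0 : ℤ) < m := by linarith
  have hm : (0 : ℚ) < (m : ℚ) := by exact_mod_cast hmz
  have hrq : (0 : ℚ) < (r : ℚ) := by exact_mod_cast hr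
  have h6q : 6 * (r : ℚ) < (m : ℚ) := by exact_mod_cast h6
  have h1 : (r : ℚ) / m < 1 / 6 := by
    rw [div_lt_div_iff₀ hm (by norm_num)]; linarith
  have h0 : (0 : ℚ) ≤ (r : ℚ) / m := by positivity
  rw [Int.fract_eq_self.mpr ⟨h0, lt_trans h1 (by norm_num)⟩]
  exact h1

private lemma main_aux (m : ℤ) (n r : ℕ) (hmn : (n : ℤ) = m) (hr0 : 0 < r)
    (hr6 : 6 * r < n) (hr3 : r % 3 = 2) (hco : Nat.Coprime r n) :
    ∃ j' : ℤ, j' % 3 = 2 ∧ Int.gcd j' m = 1 ∧ Int.fract ((j' : ℚ) / (m : ℚ)) < 1 / 6 := by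
  refine ⟨(r : ℤ), ?_, ?_, ?_⟩
  · omega
  · rw [← hmn, Int.gcd_natCast_natCast]; exact hco
  · have := frac_aux (r : ℤ) m (by exact_mod_cast hr0) (by rw [← hmn]; exact_mod_cast hr6)
    exact_mod_cast this

private lemma coprime_aux (n a b m' r : ℕ) (hn : n = 2 ^ a * (3 ^ b * m'))
    (h2 : ¬ 2 ∣ r) (h3 : ¬ 3 ∣ r) (hm : Nat.Coprime r m') : Nat.Coprime r n := by
  subst hn
  have c2 : Nat.Coprime r 2 := (Nat.prime_two.coprime_iff_not_dvd.mpr h2).symm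
  have c3 : Nat.Coprime r 3 := (Nat.prime_three.coprime_iff_not_dvd.mpr h3).symm
  exact Nat.Coprime.mul_right (c2.pow_right a) (Nat.Coprime.mul_right (c3.pow_right b) hm)

theorem stmt_3 (m : ℤ) (hm : 6 < m)
    (h : m ∉ ({9, 12, 18, 24, 30, 60} : Set ℤ)) :
    ∃ j' : ℤ, j' % 3 = 2 ∧ Int.gcd j' m = 1 ∧ Int.fract ((j' : ℚ) / (m : ℚ)) < 1 / 6 := by
  simp only [Set.mem_insert_iff, Set.mem_singleton_iff, not_or] at h
  obtain ⟨h9, h12, h18, h24, h30, h60⟩ := h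
  have hm0 : (0 : ℤ) < m := by linarith
  have hmq : (m : ℚ) ≠ 0 := by exact_mod_cast hm0.ne'
  by_cases h3 : (3 : ℤ) ∣ m
  · by_cases h2 : (2 : ℤ) ∣ m
    · -- 6 ∣ m : the hard case
      set n : ℕ := m.toNat with hndef
      have hmn : (n : ℤ) = m := Int.toNat_of_nonneg hm0.le
      have hn6 : 6 < n := by omega
      have hn0 : n ≠ 0 := by omega
      have h2n : 2 ∣ n := by omega
      have h3n : 3 ∣ n := by
        have : (3 : ℤ) ∣ (n : ℤ) := by rw [hmn]; exact h3
        exact_mod_cast this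
      set a : ℕ := n.factorization 2 with hadef
      set n₁ : ℕ := n / 2 ^ a with hn₁def
      have hfac1 : 2 ^ a * n₁ = n := Nat.ordProj_mul_ordCompl_eq_self n 2
      have h2n₁ : ¬ 2 ∣ n₁ := Nat.not_dvd_ordCompl Nat.prime_two hn0
      set b : ℕ := n₁.factorization 3 with hbdef
      set m' : ℕ := n₁ / 3 ^ b with hm'def
      have hn₁0 : n₁ ≠ 0 := by
        intro hcon; rw [hcon, mul_zero] at hfac1; omega
      have hfac2 : 3 ^ b * m' = n₁ := Nat.ordProj_mul_ordCompl_eq_self n₁ 3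
      have h3m' : ¬ 3 ∣ m' := Nat.not_dvd_ordCompl Nat.prime_three hn₁0
      have h2m' : ¬ 2 ∣ m' := by
        intro hcon
        exact h2n₁ (hcon.trans ⟨3 ^ b, by rw [← hfac2]; ring⟩)
      have hm'0 : m' ≠ 0 := by
        intro hcon; rw [hcon, mul_zero] at hfac2; omega
      have hn_eq : n = 2 ^ a * (3 ^ b * m') := by rw [hfac2, hfac1]
      have ha : 1 ≤ a := Nat.Prime.factorization_pos_of_dvd Nat.prime_two hn0 h2n
      have hb : 1 ≤ b := by
        have h3n₁ : 3 ∣ n₁ := by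
          rcases (Nat.Prime.dvd_mul Nat.prime_three).mp (hfac1 ▸ h3n) with hc | hc
          · exact absurd (Nat.Prime.dvd_of_dvd_pow Nat.prime_three hc) (by norm_num)
          · exact hc
        exact Nat.Prime.factorization_pos_of_dvd Nat.prime_three hn₁0 h3n₁
      have hpa : 2 ≤ 2 ^ a := by calc 2 = 2 ^ 1 := rfl
                                      _ ≤ 2 ^ a := Nat.pow_le_pow_right (by norm_num) ha
      have hpb : 3 ≤ 3 ^ b := by calc 3 = 3 ^ 1 := rfl
                                      _ ≤ 3 ^ b := Nat.pow_le_pow_right (by norm_num) hb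
      have hge : 6 * m' ≤ n := by
        calc 6 * m' = 2 * (3 * m') := by ring
          _ ≤ 2 ^ a * (3 ^ b * m') := by
              exact Nat.mul_le_mul hpa (Nat.mul_le_mul_right m' hpb)
          _ = n := hn_eq.symm
      have hm'2 : m' % 2 = 1 := by omega
      by_cases hone : m' = 1
      · -- n = 2^a * 3^b : show n ≥ 36, use r = 5
        have hn_eq1 : n = 2 ^ a * (3 ^ b * 1) := by rw [← hone]; exact hn_eq
        have h36 : 36 ≤ n := by
          by_contra hcon
          push_neg at hcon
          have hpa' : 2 ^ a ≤ n := by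
            calc 2 ^ a ≤ 2 ^ a * (3 ^ b * 1) := Nat.le_mul_of_pos_right _ (by positivity)
              _ = n := hn_eq1.symm
          have hpb' : 3 ^ b ≤ n := by
            calc 3 ^ b ≤ 2 ^ a * (3 ^ b * 1) := by nlinarith
              _ = n := hn_eq1.symm
          have haa : a ≤ 5 := by
            by_contra hA
            have : 2 ^ 6 ≤ 2 ^ a := Nat.pow_le_pow_right (by norm_num) (by omega)
            omega
          have hbb : b ≤ 3 := by
            by_contra hB
            have : 3 ^ 4 ≤ 3 ^ b := Nat.pow_le_pow_right (by norm_num) (by omega)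
            omega
          interval_cases a <;> interval_cases b <;> omega
        refine main_aux m n 5 hmn (by norm_num) (by omega) (by norm_num) ?_
        exact coprime_aux n a b 1 5 hn_eq1 (by norm_num) (by norm_num) (Nat.coprime_one_right 5)
      · by_cases hfive : m' = 5
        · -- n = 2^a * 3^b * 5 : show n ≥ 90, use r = 11
          have hn_eq5 : n = 2 ^ a * (3 ^ b * 5) := by rw [← hfive]; exact hn_eq
          have h90 : 90 ≤ n := by
            by_contra hcon
            push_neg at hcon
            have hpa' : 2 ^ a ≤ n := by
              calc 2 ^ a ≤ 2 ^ a * (3 ^ b * 5) := Nat.le_mul_of_pos_right _ (by positivity)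
                _ = n := hn_eq5.symm
            have hpb' : 3 ^ b ≤ n := by
              calc 3 ^ b ≤ 2 ^ a * (3 ^ b * 5) := by nlinarith
                _ = n := hn_eq5.symm
            have haa : a ≤ 6 := by
              by_contra hA
              have : 2 ^ 7 ≤ 2 ^ a := Nat.pow_le_pow_right (by norm_num) (by omega)
              omega
            have hbb : b ≤ 4 := by
              by_contra hB
              have : 3 ^ 5 ≤ 3 ^ b := Nat.pow_le_pow_right (by norm_num) (by omega)
              omega
            interval_cases a <;> interval_cases b <;> omega
          refine main_aux m n 11 hmn (by norm_num) (by omega) (by norm_num) ?_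
          exact coprime_aux n a b 5 11 hn_eq5 (by norm_num) (by norm_num) (by norm_num)
        · -- m' ≥ 7, coprime to 6
          have hm'3 : m' % 3 = 1 ∨ m' % 3 = 2 := by omega
          rcases hm'3 with hc1 | hc2
          · -- m' ≡ 1 mod 6, m' ≥ 7 : r = m' - 2
            have hm'7 : 7 ≤ m' := by omega
            have hcop : Nat.Coprime (m' - 2) m' := by
              have hdvd : Nat.gcd (m' - 2) m' ∣ 2 := by
                have := Nat.dvd_sub (Nat.gcd_dvd_right (m' - 2) m') (Nat.gcd_dvd_left (m' - 2) m')
                simpa [Nat.sub_sub_self (by omega : 2 ≤ m')] using this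
              have hdm : Nat.gcd (m' - 2) m' ∣ m' := Nat.gcd_dvd_right _ _
              have cop2 : Nat.Coprime m' 2 := (Nat.prime_two.coprime_iff_not_dvd.mpr h2m').symm
              have : Nat.gcd (m' - 2) m' ∣ Nat.gcd m' 2 := Nat.dvd_gcd hdm hdvd
              rw [cop2] at this
              exact Nat.dvd_one.mp this
            refine main_aux m n (m' - 2) hmn (by omega) (by omega) (by omega) ?_
            exact coprime_aux n a b m' (m' - 2) hn_eq (by omega) (by omega) hcop
          · -- m' ≡ 5 mod 6, m' ≥ 11 : r = m' - 6
            have hm'11 : 11 ≤ m' := by omega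
            have hcop : Nat.Coprime (m' - 6) m' := by
              have hdvd : Nat.gcd (m' - 6) m' ∣ 6 := by
                have := Nat.dvd_sub (Nat.gcd_dvd_right (m' - 6) m') (Nat.gcd_dvd_left (m' - 6) m')
                simpa [Nat.sub_sub_self (by omega : 6 ≤ m')] using this
              have hdm : Nat.gcd (m' - 6) m' ∣ m' := Nat.gcd_dvd_right _ _
              have cop2 : Nat.Coprime m' 2 := (Nat.prime_two.coprime_iff_not_dvd.mpr h2m').symm
              have cop3 : Nat.Coprime m' 3 := (Nat.prime_three.coprime_iff_not_dvd.mpr h3m').symm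
              have cop6 : Nat.Coprime m' 6 := by
                have := Nat.Coprime.mul_right cop2 cop3
                simpa using this
              have : Nat.gcd (m' - 6) m' ∣ Nat.gcd m' 6 := Nat.dvd_gcd hdm hdvd
              rw [cop6] at this
              exact Nat.dvd_one.mp this
            refine main_aux m n (m' - 6) hmn (by omega) (by omega) (by omega) ?_
            exact coprime_aux n a b m' (m' - 6) hn_eq (by omega) (by omega) hcop
    · -- 3 ∣ m, m odd : j' = 2
      have hm15 : 15 ≤ m := by omega
      refine main_aux m m.toNat 2 (Int.toNat_of_nonneg hm0.le) (by norm_num) (by omega)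
        (by norm_num) ?_
      have : ¬ 2 ∣ m.toNat := by omega
      exact Nat.prime_two.coprime_iff_not_dvd.mpr this
  · -- 3 ∤ m : j' = 1 + m * k
    have hm3 : m % 3 = 1 ∨ m % 3 = 2 := by omega
    have key : ∀ k : ℤ, (1 + m * k) % 3 = 2 →
        ∃ j' : ℤ, j' % 3 = 2 ∧ Int.gcd j' m = 1 ∧ Int.fract ((j' : ℚ) / (m : ℚ)) < 1 / 6 := by
      intro k hk
      refine ⟨1 + m * k, hk, ?_, ?_⟩
      · rw [← Int.isCoprime_iff_gcd_eq_one]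
        exact ⟨1, -k, by ring⟩
      · have heq : ((1 + m * k : ℤ) : ℚ) / (m : ℚ) = (1 : ℚ) / m + (k : ℤ) := by
          push_cast
          field_simp
        rw [heq, Int.fract_add_intCast]
        exact frac_aux 1 m (by norm_num) (by omega)
    rcases hm3 with hc | hc
    · exact key 1 (by omega)
    · exact key 2 (by omega)
end

section
/- Let m be a positive integer, j an integer with gcd(j, m) = 1, j/m ∉ {0, 2/3} (mod 1). Then for every integer t with gcd(t, 6m) = 1: if t ≡ 1 (mod 6) then ⟨t/6⟩ + ⟨−jt/m⟩ + ⟨t/3 + jt/m⟩ + ⟨t/2⟩ equals 1 when ⟨tj/m⟩ > 2/3 and equals 2 when ⟨tj/m⟩ < 2/3; if t ≡ 5 (mod 6) then the sum equals 3 when ⟨tj/m⟩ < 1/3 and equals 2 when ⟨tj/m⟩ > 1/3. -/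
theorem stmt_4 (m : ℤ) (hm : 0 < m) (j : ℤ) (hjm : Int.gcd j m = 1)
    (h0 : Int.fract ((j : ℚ) / (m : ℚ)) ≠ 0)
    (h23 : Int.fract ((j : ℚ) / (m : ℚ)) ≠ 2 / 3) :
    ∀ t : ℤ, Int.gcd t (6 * m) = 1 →
      ((t % 6 = 1 →
        ((2 / 3 < Int.fract ((t : ℚ) * j / m) →
          Int.fract ((t : ℚ) / 6) + Int.fract (-((j : ℚ) * t / m)) +
            Int.fract ((t : ℚ) / 3 + (j : ℚ) * t / m) + Int.fract ((t : ℚ) / 2) = 1) ∧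
         (Int.fract ((t : ℚ) * j / m) < 2 / 3 →
          Int.fract ((t : ℚ) / 6) + Int.fract (-((j : ℚ) * t / m)) +
            Int.fract ((t : ℚ) / 3 + (j : ℚ) * t / m) + Int.fract ((t : ℚ) / 2) = 2))) ∧
       (t % 6 = 5 →
        ((Int.fract ((t : ℚ) * j / m) < 1 / 3 →
          Int.fract ((t : ℚ) / 6) + Int.fract (-((j : ℚ) * t / m)) +
            Int.fract ((t : ℚ) / 3 + (j : ℚ) * t / m) + Int.fract ((t : ℚ) / 2) = 3) ∧
         (1 / 3 < Int.fract ((t : ℚ) * j / m) →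
          Int.fract ((t : ℚ) / 6) + Int.fract (-((j : ℚ) * t / m)) +
            Int.fract ((t : ℚ) / 3 + (j : ℚ) * t / m) + Int.fract ((t : ℚ) / 2) = 2)))) := by
  intro t ht
  have hmQ : (m : ℚ) ≠ 0 := by exact_mod_cast hm.ne'
  have hcopt : IsCoprime t m :=
    (Int.isCoprime_iff_gcd_eq_one.mpr ht).of_mul_right_right
  have hcopj : IsCoprime j m := Int.isCoprime_iff_gcd_eq_one.mpr hjm
  have hcop : IsCoprime (j * t) m := hcopj.mul_left hcopt
  set x := Int.fract ((j : ℚ) * t / m) with hxdef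
  have hx0 : 0 ≤ x := Int.fract_nonneg _
  have hx1 : x < 1 := Int.fract_lt_one _
  have hxt : Int.fract ((t : ℚ) * j / m) = x := by rw [hxdef, mul_comm (j:ℚ) (t:ℚ)]
  have hxne : x ≠ 0 := by
    intro h
    have hfl : (j : ℚ) * t / m = (⌊(j : ℚ) * t / m⌋ : ℚ) := by
      have := Int.fract ((j : ℚ) * t / m)
      rw [hxdef, Int.fract] at h
      linarith
    have hdvd : m ∣ j * t := by
      refine ⟨⌊(j : ℚ) * t / m⌋, ?_⟩
      have : (j : ℚ) * t = m * (⌊(j : ℚ) * t / m⌋ : ℚ) := by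
        field_simp at hfl; linarith
      exact_mod_cast this
    have hu : IsUnit m := hcop.isUnit_of_dvd' hdvd dvd_rfl
    have hm1 : m = 1 := by
      rcases Int.isUnit_iff.mp hu with h1 | h1 <;> omega
    apply h0
    rw [hm1]
    norm_num
  have hneg : Int.fract (-((j : ℚ) * t / m)) = 1 - x := Int.fract_neg hxne
  constructor
  · intro h1
    obtain ⟨k, hk⟩ : ∃ k, t = 6 * k + 1 := ⟨t / 6, by omega⟩
    have h6 : Int.fract ((t : ℚ) / 6) = 1 / 6 := by
      have : Int.fract ((t : ℚ) / 6) = Int.fract ((1 : ℚ) / 6) :=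
        Int.fract_eq_fract.mpr ⟨k, by subst hk; push_cast; ring⟩
      rw [this, Int.fract_eq_self.mpr ⟨by norm_num, by norm_num⟩]
    have h2 : Int.fract ((t : ℚ) / 2) = 1 / 2 := by
      have : Int.fract ((t : ℚ) / 2) = Int.fract ((1 : ℚ) / 2) :=
        Int.fract_eq_fract.mpr ⟨3 * k, by subst hk; push_cast; ring⟩
      rw [this, Int.fract_eq_self.mpr ⟨by norm_num, by norm_num⟩]
    constructor
    · intro hgt
      rw [hxt] at hgt
      have h3 : Int.fract ((t : ℚ) / 3 + (j : ℚ) * t / m) = x - 2 / 3 := by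
        have e : Int.fract ((t : ℚ) / 3 + (j : ℚ) * t / m) = Int.fract (x - 2 / 3) :=
          Int.fract_eq_fract.mpr ⟨2 * k + 1 + ⌊(j : ℚ) * t / m⌋, by
            rw [hxdef, Int.fract]; subst hk; push_cast; ring⟩
        rw [e, Int.fract_eq_self.mpr ⟨by linarith, by linarith⟩]
      rw [h6, hneg, h3, h2]; ring
    · intro hlt
      rw [hxt] at hlt
      have h3 : Int.fract ((t : ℚ) / 3 + (j : ℚ) * t / m) = 1 / 3 + x := by
        have e : Int.fract ((t : ℚ) / 3 + (j : ℚ) * t / m) = Int.fract (1 / 3 + x) :=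
          Int.fract_eq_fract.mpr ⟨2 * k + ⌊(j : ℚ) * t / m⌋, by
            rw [hxdef, Int.fract]; subst hk; push_cast; ring⟩
        rw [e, Int.fract_eq_self.mpr ⟨by linarith, by linarith⟩]
      rw [h6, hneg, h3, h2]; ring
  · intro h5
    obtain ⟨k, hk⟩ : ∃ k, t = 6 * k + 5 := ⟨t / 6, by omega⟩
    have h6 : Int.fract ((t : ℚ) / 6) = 5 / 6 := by
      have : Int.fract ((t : ℚ) / 6) = Int.fract ((5 : ℚ) / 6) :=
        Int.fract_eq_fract.mpr ⟨k, by subst hk; push_cast; ring⟩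
      rw [this, Int.fract_eq_self.mpr ⟨by norm_num, by norm_num⟩]
    have h2 : Int.fract ((t : ℚ) / 2) = 1 / 2 := by
      have : Int.fract ((t : ℚ) / 2) = Int.fract ((1 : ℚ) / 2) :=
        Int.fract_eq_fract.mpr ⟨3 * k + 2, by subst hk; push_cast; ring⟩
      rw [this, Int.fract_eq_self.mpr ⟨by norm_num, by norm_num⟩]
    constructor
    · intro hlt
      rw [hxt] at hlt
      have h3 : Int.fract ((t : ℚ) / 3 + (j : ℚ) * t / m) = 2 / 3 + x := by
        have e : Int.fract ((t : ℚ) / 3 + (j : ℚ) * t / m) = Int.fract (2 / 3 + x) :=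
          Int.fract_eq_fract.mpr ⟨2 * k + 1 + ⌊(j : ℚ) * t / m⌋, by
            rw [hxdef, Int.fract]; subst hk; push_cast; ring⟩
        rw [e, Int.fract_eq_self.mpr ⟨by linarith, by linarith⟩]
      rw [h6, hneg, h3, h2]; ring
    · intro hgt
      rw [hxt] at hgt
      have h3 : Int.fract ((t : ℚ) / 3 + (j : ℚ) * t / m) = x - 1 / 3 := by
        have e : Int.fract ((t : ℚ) / 3 + (j : ℚ) * t / m) = Int.fract (x - 1 / 3) :=
          Int.fract_eq_fract.mpr ⟨2 * k + 2 + ⌊(j : ℚ) * t / m⌋, by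
            rw [hxdef, Int.fract]; subst hk; push_cast; ring⟩
        rw [e, Int.fract_eq_self.mpr ⟨by linarith, by linarith⟩]
      rw [h6, hneg, h3, h2]; ring
end

section
/- Let f = X^a + Y^b + s^n X^{λa} Y^{(1−λ)b} in k(s)[X^{±1}, Y^{±1}] with k an algebraically closed field of characteristic 0, s transcendental over k, n a nonzero integer, a, b positive integers, and λ ∈ ℚ with 0 < λ < 1 such that λa and (1−λ)b are integers. Then the system f = 0, X·∂f/∂X = 0 has no solution (x, y) with x, y ∈ (algebraic closure of k(s))* when a ≠ 0. -/
lemma helperXm (k : Type*) [Field k] (m : ℕ) (hm : 0 < m) (γ1 γ2 : k) (hγ1 : γ1 ≠ 0)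
    (h : (algebraMap (RatFunc k) (AlgebraicClosure (RatFunc k)) RatFunc.X) ^ m *
        algebraMap (RatFunc k) (AlgebraicClosure (RatFunc k)) (RatFunc.C γ1) =
        algebraMap (RatFunc k) (AlgebraicClosure (RatFunc k)) (RatFunc.C γ2)) : False := by
  rw [← map_pow, ← map_mul] at h
  have h2 := (algebraMap (RatFunc k) (AlgebraicClosure (RatFunc k))).injective h
  rw [← RatFunc.algebraMap_C γ2, ← RatFunc.algebraMap_C γ1, ← RatFunc.algebraMap_X, ← map_pow, ← map_mul] at h2
  have h3 := RatFunc.algebraMap_injective k h2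
  have h4 := congrArg Polynomial.natDegree h3
  rw [Polynomial.natDegree_mul (pow_ne_zero m Polynomial.X_ne_zero) (by simpa using hγ1)] at h4
  simp at h4
  omega

theorem stmt_8 (k : Type*) [Field k] [IsAlgClosed k] [CharZero k]
    (a b p q : ℕ) (ha : 0 < a) (hb : 0 < b) (hp : 0 < p) (hpa : p < a)
    (hlam : p * b + q * a = a * b) (n : ℤ) (hn : n ≠ 0) :
    ¬ ∃ x y : AlgebraicClosure (RatFunc k), x ≠ 0 ∧ y ≠ 0 ∧
        x ^ a + y ^ b +
          (algebraMap (RatFunc k) (AlgebraicClosure (RatFunc k)) RatFunc.X) ^ n *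
            x ^ p * y ^ q = 0 ∧
        (a : AlgebraicClosure (RatFunc k)) * x ^ a +
          (p : AlgebraicClosure (RatFunc k)) *
            (algebraMap (RatFunc k) (AlgebraicClosure (RatFunc k)) RatFunc.X) ^ n *
            x ^ p * y ^ q = 0 := by
  haveI : CharZero (RatFunc k) :=
    charZero_of_injective_algebraMap (algebraMap k (RatFunc k)).injective
  haveI : CharZero (AlgebraicClosure (RatFunc k)) :=
    charZero_of_injective_algebraMap
      (algebraMap (RatFunc k) (AlgebraicClosure (RatFunc k))).injective
  rintro ⟨x, y, hx, hy, h1, h2⟩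
  set s : AlgebraicClosure (RatFunc k) :=
    algebraMap (RatFunc k) (AlgebraicClosure (RatFunc k)) RatFunc.X with hsdef
  have hs0 : s ≠ 0 := by
    simp [hsdef, map_ne_zero, RatFunc.X_ne_zero]
  set t : AlgebraicClosure (RatFunc k) := s ^ n with htdef
  have hpK : (p : (AlgebraicClosure (RatFunc k))) ≠ 0 := Nat.cast_ne_zero.mpr hp.ne'
  have hapK : (a : (AlgebraicClosure (RatFunc k))) - (p : (AlgebraicClosure (RatFunc k))) ≠ 0 := by
    rw [sub_ne_zero]
    exact_mod_cast hpa.ne'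
  have haK : (a : (AlgebraicClosure (RatFunc k))) ≠ 0 := Nat.cast_ne_zero.mpr ha.ne'
  have E1 : (p : (AlgebraicClosure (RatFunc k))) * y ^ b = ((a : (AlgebraicClosure (RatFunc k))) - (p : (AlgebraicClosure (RatFunc k)))) * x ^ a := by
    linear_combination (p : (AlgebraicClosure (RatFunc k))) * h1 - h2
  have E2 : (p : (AlgebraicClosure (RatFunc k))) * (t * x ^ p * y ^ q) = -(a : (AlgebraicClosure (RatFunc k))) * x ^ a := by
    linear_combination h2
  have hxab : x ^ (p * b) * x ^ (q * a) = x ^ (a * b) := by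
    rw [← pow_add, hlam]
  have E2b : (p : (AlgebraicClosure (RatFunc k))) ^ b * t ^ b * x ^ (p * b) * y ^ (q * b)
      = (-(a : (AlgebraicClosure (RatFunc k)))) ^ b * x ^ (a * b) := by
    have h := congrArg (· ^ b) E2
    simp only [mul_pow, ← pow_mul] at h
    linear_combination h
  have E1q : (p : (AlgebraicClosure (RatFunc k))) ^ q * y ^ (b * q) = ((a : (AlgebraicClosure (RatFunc k))) - (p : (AlgebraicClosure (RatFunc k)))) ^ q * x ^ (a * q) := by
    have h := congrArg (· ^ q) E1
    simp only [mul_pow, ← pow_mul] at h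
    linear_combination h
  have step : (((p : (AlgebraicClosure (RatFunc k))) ^ b * ((a : (AlgebraicClosure (RatFunc k))) - (p : (AlgebraicClosure (RatFunc k)))) ^ q) * t ^ b) * (x ^ (a * b) * y ^ (q * b))
      = ((-(a : (AlgebraicClosure (RatFunc k)))) ^ b * (p : (AlgebraicClosure (RatFunc k))) ^ q) * (x ^ (a * b) * y ^ (q * b)) := by
    linear_combination (((a : (AlgebraicClosure (RatFunc k))) - (p : (AlgebraicClosure (RatFunc k)))) ^ q * x ^ (q * a)) * E2b
      - ((-(a : (AlgebraicClosure (RatFunc k)))) ^ b * x ^ (a * b)) * E1q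
      - ((p : (AlgebraicClosure (RatFunc k))) ^ b * ((a : (AlgebraicClosure (RatFunc k))) - (p : (AlgebraicClosure (RatFunc k)))) ^ q * t ^ b * y ^ (q * b)) * hxab
  have Key : ((p : (AlgebraicClosure (RatFunc k))) ^ b * ((a : (AlgebraicClosure (RatFunc k))) - (p : (AlgebraicClosure (RatFunc k)))) ^ q) * t ^ b
      = (-(a : (AlgebraicClosure (RatFunc k)))) ^ b * (p : (AlgebraicClosure (RatFunc k))) ^ q :=
    mul_right_cancel₀ (mul_ne_zero (pow_ne_zero _ hx) (pow_ne_zero _ hy)) step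
  have htb : t ^ b = s ^ (n * (b : ℤ)) := by
    rw [htdef, ← zpow_natCast (s ^ n) b, ← zpow_mul]
  have hc1 : ((p : (AlgebraicClosure (RatFunc k))) ^ b * ((a : (AlgebraicClosure (RatFunc k))) - (p : (AlgebraicClosure (RatFunc k)))) ^ q)
      = algebraMap (RatFunc k) (AlgebraicClosure (RatFunc k)) (RatFunc.C ((p : k) ^ b * ((a : k) - (p : k)) ^ q)) := by
    simp [map_mul, map_pow, map_sub, map_natCast]
  have hc2 : ((-(a : (AlgebraicClosure (RatFunc k)))) ^ b * (p : (AlgebraicClosure (RatFunc k))) ^ q)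
      = algebraMap (RatFunc k) (AlgebraicClosure (RatFunc k)) (RatFunc.C ((-(a : k)) ^ b * (p : k) ^ q)) := by
    simp [map_mul, map_pow, map_sub, map_natCast, map_neg]
  have hγ1 : ((p : k) ^ b * ((a : k) - (p : k)) ^ q) ≠ 0 := by
    apply mul_ne_zero (pow_ne_zero _ (Nat.cast_ne_zero.mpr hp.ne'))
    apply pow_ne_zero
    rw [sub_ne_zero]
    exact_mod_cast hpa.ne'
  have hγ2 : ((-(a : k)) ^ b * (p : k) ^ q) ≠ 0 := by
    exact mul_ne_zero (pow_ne_zero _ (neg_ne_zero.mpr (Nat.cast_ne_zero.mpr ha.ne')))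
      (pow_ne_zero _ (Nat.cast_ne_zero.mpr hp.ne'))
  rcases hn.lt_or_gt with hneg | hpos
  · set m : ℕ := (-(n * b)).toNat with hmdef
    have hb' : (0:ℤ) < (b:ℤ) := by exact_mod_cast hb
    have hnb : n * (b:ℤ) < 0 := mul_neg_of_neg_of_pos hneg hb'
    have hm : 0 < m := by rw [hmdef]; omega
    have hmb : (m : ℤ) = -(n * b) := by rw [hmdef]; omega
    have hsm : s ^ (n * (b : ℤ)) = (s ^ m)⁻¹ := by
      rw [← zpow_natCast s m, hmb, zpow_neg, inv_inv]
    rw [htb, hsm] at Key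
    have hsmne : s ^ m ≠ 0 := pow_ne_zero _ hs0
    have key2 : s ^ m * ((-(a : (AlgebraicClosure (RatFunc k)))) ^ b * (p : (AlgebraicClosure (RatFunc k))) ^ q)
        = (p : (AlgebraicClosure (RatFunc k))) ^ b * ((a : (AlgebraicClosure (RatFunc k))) - (p : (AlgebraicClosure (RatFunc k)))) ^ q := by
      field_simp at Key
      linear_combination -Key
    rw [hc1, hc2] at key2
    exact helperXm k m hm _ _ hγ2 key2
  · set m : ℕ := (n * b).toNat with hmdef
    have hb' : (0:ℤ) < (b:ℤ) := by exact_mod_cast hb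
    have hnb : 0 < n * (b:ℤ) := mul_pos hpos hb'
    have hm : 0 < m := by rw [hmdef]; omega
    have hmb : (m : ℤ) = n * b := by rw [hmdef]; omega
    have hsm : s ^ (n * (b : ℤ)) = s ^ m := by
      rw [← zpow_natCast s m, hmb]
    rw [htb, hsm] at Key
    have key2 : s ^ m * ((p : (AlgebraicClosure (RatFunc k))) ^ b * ((a : (AlgebraicClosure (RatFunc k))) - (p : (AlgebraicClosure (RatFunc k)))) ^ q)
        = (-(a : (AlgebraicClosure (RatFunc k)))) ^ b * (p : (AlgebraicClosure (RatFunc k))) ^ q := by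
      linear_combination Key
    rw [hc1, hc2] at key2
    exact helperXm k m hm _ _ hγ1 key2
end

section
/- Let m, j be coprime integers with m > 0. Then for all integers t coprime to 4m: ⟨tj/m − 3t/4⟩ + ⟨−tj/m⟩ + ⟨t/4⟩ + ⟨t/2⟩ equals 2 if t ≡ 1 (mod 4) and ⟨tj/m⟩ < 3/4, equals 1 if t ≡ 1 (mod 4) and ⟨tj/m⟩ > 3/4, equals 3 if t ≡ 3 (mod 4) and ⟨tj/m⟩ < 1/4, and equals 2 if t ≡ 3 (mod 4) and ⟨tj/m⟩ > 1/4. -/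
theorem stmt_13 (m j : ℤ) (hm : 0 < m) (hjm : Int.gcd j m = 1) (hndvd : ¬ m ∣ j) :
    ∀ t : ℤ, Int.gcd t (4 * m) = 1 →
      ((t % 4 = 1 → Int.fract ((t : ℚ) * j / m) < 3 / 4 →
        Int.fract ((t : ℚ) * j / m - 3 * t / 4) + Int.fract (-((t : ℚ) * j / m)) +
          Int.fract ((t : ℚ) / 4) + Int.fract ((t : ℚ) / 2) = 2) ∧
       (t % 4 = 1 → 3 / 4 < Int.fract ((t : ℚ) * j / m) →
        Int.fract ((t : ℚ) * j / m - 3 * t / 4) + Int.fract (-((t : ℚ) * j / m)) +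
          Int.fract ((t : ℚ) / 4) + Int.fract ((t : ℚ) / 2) = 1) ∧
       (t % 4 = 3 → Int.fract ((t : ℚ) * j / m) < 1 / 4 →
        Int.fract ((t : ℚ) * j / m - 3 * t / 4) + Int.fract (-((t : ℚ) * j / m)) +
          Int.fract ((t : ℚ) / 4) + Int.fract ((t : ℚ) / 2) = 3) ∧
       (t % 4 = 3 → 1 / 4 < Int.fract ((t : ℚ) * j / m) →
        Int.fract ((t : ℚ) * j / m - 3 * t / 4) + Int.fract (-((t : ℚ) * j / m)) +
          Int.fract ((t : ℚ) / 4) + Int.fract ((t : ℚ) / 2) = 2)) := by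
  intro t ht
  have hm0 : (m : ℚ) ≠ 0 := by exact_mod_cast hm.ne'
  set x : ℚ := (t : ℚ) * j / m with hxdef
  have hcop : IsCoprime (t : ℤ) m :=
    (Int.isCoprime_iff_gcd_eq_one.mpr ht).of_mul_right_right
  have hf0 : Int.fract x ≠ 0 := by
    intro h
    apply hndvd
    have hx : x = (⌊x⌋ : ℚ) := by
      have := Int.fract_add_floor x
      simp [h] at this
      linarith [Int.self_sub_floor x]
    rw [hxdef] at hx
    have h2 : (t : ℚ) * j = ⌊x⌋ * m := by field_simp at hx; linarith
    have hz : t * j = ⌊x⌋ * m := by exact_mod_cast h2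
    have hdvd : m ∣ t * j := ⟨⌊x⌋, by linarith⟩
    exact hcop.symm.dvd_of_dvd_mul_left hdvd
  have hneg : Int.fract (-x) = 1 - Int.fract x := Int.fract_neg hf0
  have hfl : 0 ≤ Int.fract x := Int.fract_nonneg x
  have hfu : Int.fract x < 1 := Int.fract_lt_one x
  have hxf : x = ⌊x⌋ + Int.fract x := by
    linarith [Int.self_sub_floor x]
  have hdm : 4 * (t / 4) + t % 4 = t := Int.mul_ediv_add_emod t 4
  refine ⟨?_, ?_, ?_, ?_⟩
  · intro h1 hlt
    have htq : (t : ℚ) = 4 * (t / 4 : ℤ) + 1 := by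
      have : (4 : ℤ) * (t / 4) + 1 = t := by rw [← h1]; exact hdm
      exact_mod_cast this.symm
    have e1 : Int.fract (x - 3 * t / 4) = Int.fract x + 1 / 4 := by
      rw [show x - 3 * (t : ℚ) / 4 =
        (Int.fract x + 1 / 4) + ((⌊x⌋ - 3 * (t / 4) - 1 : ℤ) : ℚ) by
          rw [htq]; push_cast; linarith [hxf]]
      rw [Int.fract_add_intCast, Int.fract_eq_self.2 ⟨by linarith, by linarith⟩]
    have e2 : Int.fract ((t : ℚ) / 4) = 1 / 4 := by
      rw [show (t : ℚ) / 4 = 1 / 4 + ((t / 4 : ℤ) : ℚ) by rw [htq]; push_cast; ring]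
      rw [Int.fract_add_intCast]; norm_num [Int.fract_eq_self.2]
    have e3 : Int.fract ((t : ℚ) / 2) = 1 / 2 := by
      rw [show (t : ℚ) / 2 = 1 / 2 + ((2 * (t / 4) : ℤ) : ℚ) by rw [htq]; push_cast; ring]
      rw [Int.fract_add_intCast]; norm_num [Int.fract_eq_self.2]
    rw [e1, hneg, e2, e3]; ring
  · intro h1 hlt
    have htq : (t : ℚ) = 4 * (t / 4 : ℤ) + 1 := by
      have : (4 : ℤ) * (t / 4) + 1 = t := by rw [← h1]; exact hdm
      exact_mod_cast this.symm
    have e1 : Int.fract (x - 3 * t / 4) = Int.fract x - 3 / 4 := by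
      rw [show x - 3 * (t : ℚ) / 4 =
        (Int.fract x - 3 / 4) + ((⌊x⌋ - 3 * (t / 4) : ℤ) : ℚ) by
          rw [htq]; push_cast; linarith [hxf]]
      rw [Int.fract_add_intCast, Int.fract_eq_self.2 ⟨by linarith, by linarith⟩]
    have e2 : Int.fract ((t : ℚ) / 4) = 1 / 4 := by
      rw [show (t : ℚ) / 4 = 1 / 4 + ((t / 4 : ℤ) : ℚ) by rw [htq]; push_cast; ring]
      rw [Int.fract_add_intCast]; norm_num [Int.fract_eq_self.2]
    have e3 : Int.fract ((t : ℚ) / 2) = 1 / 2 := by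
      rw [show (t : ℚ) / 2 = 1 / 2 + ((2 * (t / 4) : ℤ) : ℚ) by rw [htq]; push_cast; ring]
      rw [Int.fract_add_intCast]; norm_num [Int.fract_eq_self.2]
    rw [e1, hneg, e2, e3]; ring
  · intro h1 hlt
    have htq : (t : ℚ) = 4 * (t / 4 : ℤ) + 3 := by
      have : (4 : ℤ) * (t / 4) + 3 = t := by rw [← h1]; exact hdm
      exact_mod_cast this.symm
    have e1 : Int.fract (x - 3 * t / 4) = Int.fract x + 3 / 4 := by
      rw [show x - 3 * (t : ℚ) / 4 =
        (Int.fract x + 3 / 4) + ((⌊x⌋ - 3 * (t / 4) - 3 : ℤ) : ℚ) by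
          rw [htq]; push_cast; linarith [hxf]]
      rw [Int.fract_add_intCast, Int.fract_eq_self.2 ⟨by linarith, by linarith⟩]
    have e2 : Int.fract ((t : ℚ) / 4) = 3 / 4 := by
      rw [show (t : ℚ) / 4 = 3 / 4 + ((t / 4 : ℤ) : ℚ) by rw [htq]; push_cast; ring]
      rw [Int.fract_add_intCast]; norm_num [Int.fract_eq_self.2]
    have e3 : Int.fract ((t : ℚ) / 2) = 1 / 2 := by
      rw [show (t : ℚ) / 2 = 1 / 2 + ((2 * (t / 4) + 1 : ℤ) : ℚ) by rw [htq]; push_cast; ring]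
      rw [Int.fract_add_intCast]; norm_num [Int.fract_eq_self.2]
    rw [e1, hneg, e2, e3]; ring
  · intro h1 hlt
    have htq : (t : ℚ) = 4 * (t / 4 : ℤ) + 3 := by
      have : (4 : ℤ) * (t / 4) + 3 = t := by rw [← h1]; exact hdm
      exact_mod_cast this.symm
    have e1 : Int.fract (x - 3 * t / 4) = Int.fract x - 1 / 4 := by
      rw [show x - 3 * (t : ℚ) / 4 =
        (Int.fract x - 1 / 4) + ((⌊x⌋ - 3 * (t / 4) - 2 : ℤ) : ℚ) by
          rw [htq]; push_cast; linarith [hxf]]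
      rw [Int.fract_add_intCast, Int.fract_eq_self.2 ⟨by linarith, by linarith⟩]
    have e2 : Int.fract ((t : ℚ) / 4) = 3 / 4 := by
      rw [show (t : ℚ) / 4 = 3 / 4 + ((t / 4 : ℤ) : ℚ) by rw [htq]; push_cast; ring]
      rw [Int.fract_add_intCast]; norm_num [Int.fract_eq_self.2]
    have e3 : Int.fract ((t : ℚ) / 2) = 1 / 2 := by
      rw [show (t : ℚ) / 2 = 1 / 2 + ((2 * (t / 4) + 1 : ℤ) : ℚ) by rw [htq]; push_cast; ring]
      rw [Int.fract_add_intCast]; norm_num [Int.fract_eq_self.2]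
    rw [e1, hneg, e2, e3]; ring
end

section
/- Let m, j be coprime integers, m > 0, m ∤ j. Then for all integers t coprime to m with t odd: ⟨−tj/m⟩ + ⟨2tj/m − t/2⟩ + ⟨−tj/m⟩ + ⟨t/2⟩ equals 3 if ⟨tj/m⟩ < 1/4, equals 2 if 1/4 < ⟨tj/m⟩ < 3/4, and equals 1 if ⟨tj/m⟩ > 3/4. -/
theorem stmt_14 (m j : ℤ) (hm : 0 < m) (hjm : Int.gcd j m = 1) (hndvd : ¬ m ∣ j) :
    ∀ t : ℤ, Int.gcd t m = 1 → Odd t →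
      ((Int.fract ((t : ℚ) * j / m) < 1 / 4 →
        Int.fract (-((t : ℚ) * j / m)) + Int.fract (2 * ((t : ℚ) * j / m) - t / 2) +
          Int.fract (-((t : ℚ) * j / m)) + Int.fract ((t : ℚ) / 2) = 3) ∧
       (1 / 4 < Int.fract ((t : ℚ) * j / m) → Int.fract ((t : ℚ) * j / m) < 3 / 4 →
        Int.fract (-((t : ℚ) * j / m)) + Int.fract (2 * ((t : ℚ) * j / m) - t / 2) +
          Int.fract (-((t : ℚ) * j / m)) + Int.fract ((t : ℚ) / 2) = 2) ∧
       (3 / 4 < Int.fract ((t : ℚ) * j / m) →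
        Int.fract (-((t : ℚ) * j / m)) + Int.fract (2 * ((t : ℚ) * j / m) - t / 2) +
          Int.fract (-((t : ℚ) * j / m)) + Int.fract ((t : ℚ) / 2) = 1)) := by
  intro t htm hodd
  set y : ℚ := (t : ℚ) * j / m with hy
  set x : ℚ := Int.fract y with hx
  -- x ≠ 0
  have hmne : (m : ℚ) ≠ 0 := by positivity
  have hx0 : x ≠ 0 := by
    intro h0
    have hfl : y = (⌊y⌋ : ℚ) := by
      rw [hx] at h0
      have := Int.floor_add_fract y
      linarith
    have : ((t * j : ℤ) : ℚ) = ((m * ⌊y⌋ : ℤ) : ℚ) := by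
      push_cast
      rw [hy] at hfl; field_simp at hfl ⊢
      linarith [hfl]
    have hdvd : m ∣ t * j := ⟨⌊y⌋, by exact_mod_cast this⟩
    have hcop : IsCoprime (t * j) m :=
      IsCoprime.mul_left (Int.isCoprime_iff_gcd_eq_one.mpr htm)
        (Int.isCoprime_iff_gcd_eq_one.mpr hjm)
    have hunit : IsUnit m := hcop.symm.isUnit_of_dvd hdvd
    rcases Int.isUnit_iff.mp hunit with h1 | h1
    · exact hndvd (h1 ▸ one_dvd j)
    · omega
  have hx1 : 0 < x := lt_of_le_of_ne (Int.fract_nonneg y) (Ne.symm hx0)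
  have hx2 : x < 1 := Int.fract_lt_one y
  have hneg : Int.fract (-y) = 1 - x := by
    rw [Int.fract_neg hx0]
  obtain ⟨k, hk⟩ := hodd
  have hkq : (t : ℚ) = 2 * k + 1 := by exact_mod_cast congrArg (Int.cast : ℤ → ℚ) hk
  have hhalf : Int.fract ((t : ℚ) / 2) = 1 / 2 := by
    rw [hkq]
    have : (2 * (k : ℚ) + 1) / 2 = (k : ℚ) + 1 / 2 := by ring
    rw [this, Int.fract_intCast_add]
    norm_num [Int.fract_eq_self]
  -- fract (2y - t/2) = fract (2x - 1/2)
  have hmain : Int.fract (2 * y - (t : ℚ) / 2) = Int.fract (2 * x - 1 / 2) := by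
    have hyx : y = (⌊y⌋ : ℚ) + x := by rw [hx]; linarith [Int.floor_add_fract y]
    have : 2 * y - (t : ℚ) / 2 = ((2 * ⌊y⌋ - k : ℤ) : ℚ) + (2 * x - 1 / 2) := by
      rw [hkq]; push_cast; linarith [hyx]
    rw [this, Int.fract_intCast_add]
  refine ⟨?_, ?_, ?_⟩
  · intro h1
    have : Int.fract (2 * x - 1 / 2) = 2 * x + 1 / 2 := by
      have : 2 * x - 1 / 2 = (((-1 : ℤ)) : ℚ) + (2 * x + 1 / 2) := by push_cast; ring
      rw [this, Int.fract_intCast_add, Int.fract_eq_self.mpr ⟨by linarith, by linarith⟩]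
    rw [hneg, hmain, hhalf, this]; ring
  · intro h1 h2
    have : Int.fract (2 * x - 1 / 2) = 2 * x - 1 / 2 :=
      Int.fract_eq_self.mpr ⟨by linarith, by linarith⟩
    rw [hneg, hmain, hhalf, this]; ring
  · intro h1
    have : Int.fract (2 * x - 1 / 2) = 2 * x - 3 / 2 := by
      have : 2 * x - 1 / 2 = ((1 : ℤ) : ℚ) + (2 * x - 3 / 2) := by push_cast; ring
      rw [this, Int.fract_intCast_add, Int.fract_eq_self.mpr ⟨by linarith, by linarith⟩]
    rw [hneg, hmain, hhalf, this]; ring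
end
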